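/- If f is C² with f(0)=f'(0)=0 and u ∈ Y ∩ C²(ℝ), then lim_{h→0⁺} E_h(u) = (1/24) ∫_ℝ f''(u(x)) |u'(x)|² dx. -/

import Mathlib

open MeasureTheory Set intervalIntegral Filter Topology

section Aux

lemma aux_abs_sub_le_of_uIcc {s t r : ℝ} (hr : r ∈ uIcc s t) : |r - s| ≤ |t - s| := by
  rcases le_total s t with hst | hst
  · rw [uIcc_of_le hst, mem_Icc] at hr
    rw [abs_sub_le_iff]
    constructor <;>
      · have := le_abs_self (t - s); have := neg_abs_le (t - s); linarith [hr.1, hr.2]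
  · rw [uIcc_of_ge hst, mem_Icc] at hr
    rw [abs_sub_le_iff]
    constructor <;>
      · have := le_abs_self (t - s); have := neg_abs_le (t - s); linarith [hr.1, hr.2]

lemma aux_taylor_bound {f : ℝ → ℝ} (hf1 : Differentiable ℝ f)
    (hD : Differentiable ℝ (deriv f)) {M C : ℝ}
    (hC : ∀ r ∈ Icc (-M) M, |deriv (deriv f) r| ≤ C) {s t : ℝ}
    (hs : s ∈ Icc (-M) M) (ht : t ∈ Icc (-M) M) :
    |f t - f s - deriv f s * (t - s)| ≤ C * (t - s) ^ 2 := by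
  have hLip : ∀ r ∈ Icc (-M) M, |deriv f r - deriv f s| ≤ C * |r - s| := by
    intro r hr
    have := Convex.norm_image_sub_le_of_norm_deriv_le (f := deriv f)
      (fun x _ => hD x) (fun x hx => hC x hx) (convex_Icc _ _) hs hr
    simpa [Real.norm_eq_abs] using this
  have hsub : uIcc s t ⊆ Icc (-M) M := uIcc_subset_Icc hs ht
  set g : ℝ → ℝ := fun r => f r - deriv f s * r with hg
  have hgd : ∀ r, HasDerivAt g (deriv f r - deriv f s) r := by
    intro r
    have h1 := (hf1 r).hasDerivAt
    have h2 : HasDerivAt (fun r : ℝ => deriv f s * r) (deriv f s) r := by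
      simpa using (hasDerivAt_id r).const_mul (deriv f s)
    exact h1.sub h2
  have key : ‖g t - g s‖ ≤ (C * |t - s|) * ‖t - s‖ := by
    apply Convex.norm_image_sub_le_of_norm_hasDerivWithin_le
      (f' := fun r => deriv f r - deriv f s)
      (fun r _ => (hgd r).hasDerivWithinAt)
      (fun r hr => ?_) (convex_uIcc s t) (left_mem_uIcc) (right_mem_uIcc)
    rw [Real.norm_eq_abs]
    calc |deriv f r - deriv f s| ≤ C * |r - s| := hLip r (hsub hr)
      _ ≤ C * |t - s| := mul_le_mul_of_nonneg_left (aux_abs_sub_le_of_uIcc hr)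
          ((abs_nonneg _).trans (hC s hs))
  have : g t - g s = f t - f s - deriv f s * (t - s) := by simp [hg]; ring
  rw [this] at key
  rw [Real.norm_eq_abs] at key
  calc |f t - f s - deriv f s * (t - s)| ≤ C * |t - s| * |t - s| := key
    _ = C * (t - s) ^ 2 := by rw [mul_assoc, ← abs_mul, abs_mul_self]; ring

lemma aux_slope_comp_limit {g : ℝ → ℝ} {x c : ℝ} (hg2 : HasDerivAt g c x) :
    Tendsto (fun h : ℝ => (g (x + h) - g x) / h) (𝓝[≠] (0:ℝ)) (𝓝 c) := by
  have hs := hasDerivAt_iff_tendsto_slope.mp hg2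
  have hmap : Tendsto (fun h : ℝ => x + h) (𝓝[≠] (0:ℝ)) (𝓝[≠] x) := by
    rw [tendsto_nhdsWithin_iff]
    constructor
    · have : Tendsto (fun h : ℝ => x + h) (𝓝 (0:ℝ)) (𝓝 (x + 0)) :=
        (continuous_const.add continuous_id).tendsto 0
      simpa using this.mono_left nhdsWithin_le_nhds
    · filter_upwards [self_mem_nhdsWithin] with h hh
      simp only [mem_compl_iff, mem_singleton_iff] at hh ⊢
      intro hc
      exact hh (by linarith)
  have := hs.comp hmap
  refine this.congr fun h => ?_
  simp [Function.comp, slope_def_field]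

lemma aux_cube_limit {g : ℝ → ℝ} (hgc : Continuous g) (hg1 : Differentiable ℝ g) (x : ℝ)
    (hg2 : HasDerivAt (deriv g) (deriv (deriv g) x) x) :
    Tendsto (fun h : ℝ => ((∫ y in x..x + h, g y) - h * g x - h ^ 2 / 2 * deriv g x) / h ^ 3)
      (𝓝[>] (0:ℝ)) (𝓝 (deriv (deriv g) x / 6)) := by
  have hInt : ∀ c d : ℝ, IntervalIntegrable g volume c d := fun c d =>
    hgc.intervalIntegrable c d
  have hΦ : ∀ w : ℝ, HasDerivAt (fun w => ∫ y in x..w, g y) (g w) w := fun w =>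
    integral_hasDerivAt_right (hInt x w)
      (hgc.stronglyMeasurableAtFilter _ _) hgc.continuousAt
  have hN : ∀ h : ℝ, HasDerivAt
      (fun h : ℝ => (∫ y in x..x + h, g y) - h * g x - h ^ 2 / 2 * deriv g x)
      (g (x + h) - g x - h * deriv g x) h := by
    intro h
    have h1 : HasDerivAt (fun h : ℝ => ∫ y in x..x + h, g y) (g (x + h)) h := by
      have := (hΦ (x + h)).comp h ((hasDerivAt_id h).const_add x)
      simpa [Function.comp_def] using this
    have h2 : HasDerivAt (fun h : ℝ => h * g x) (g x) h := by
      simpa using (hasDerivAt_id h).mul_const (g x)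
    have h3 : HasDerivAt (fun h : ℝ => h ^ 2 / 2 * deriv g x) (h * deriv g x) h :=
      (((hasDerivAt_pow 2 h).div_const 2).mul_const (deriv g x)).congr_deriv
        (by push_cast; ring)
    exact (h1.sub h2).sub h3
  have hN' : ∀ h : ℝ, HasDerivAt
      (fun h : ℝ => g (x + h) - g x - h * deriv g x)
      (deriv g (x + h) - deriv g x) h := by
    intro h
    have h1 : HasDerivAt (fun h : ℝ => g (x + h)) (deriv g (x + h)) h := by
      have := ((hg1 (x + h)).hasDerivAt).comp h ((hasDerivAt_id h).const_add x)
      simpa [Function.comp_def] using this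
    have h2 : HasDerivAt (fun h : ℝ => h * deriv g x) (deriv g x) h := by
      simpa using (hasDerivAt_id h).mul_const (deriv g x)
    exact ((h1.sub (hasDerivAt_const h (g x))).sub h2).congr_deriv (by ring)
  have hcont : Continuous fun h : ℝ => ∫ y in x..x + h, g y :=
    (intervalIntegral.continuous_primitive hInt x).comp (continuous_const.add continuous_id)
  have hdiv2 : Tendsto (fun h : ℝ => (deriv g (x + h) - deriv g x) / (6 * h))
      (𝓝[>] (0:ℝ)) (𝓝 (deriv (deriv g) x / 6)) := by
    have := (aux_slope_comp_limit hg2).div_const 6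
    have := this.mono_left (nhdsWithin_mono _ (fun h (hh : h ∈ Ioi (0:ℝ)) => ne_of_gt hh))
    refine this.congr fun h => ?_
    rw [div_div, mul_comm]
  have step2 : Tendsto (fun h : ℝ => (g (x + h) - g x - h * deriv g x) / (3 * h ^ 2))
      (𝓝[>] (0:ℝ)) (𝓝 (deriv (deriv g) x / 6)) := by
    apply HasDerivAt.lhopital_zero_nhdsGT (f' := fun h => deriv g (x + h) - deriv g x)
      (g' := fun h => 6 * h)
    · filter_upwards with h; exact hN' h
    · filter_upwards with h
      exact ((hasDerivAt_pow 2 h).const_mul 3).congr_deriv (by push_cast; ring)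
    · filter_upwards [self_mem_nhdsWithin] with h (hh : h ∈ Ioi (0:ℝ))
      have : (0:ℝ) < h := hh
      positivity
    · have hc : Continuous fun h : ℝ => g (x + h) - g x - h * deriv g x := by
        continuity
      have := hc.tendsto 0
      simp only [add_zero, zero_mul, sub_zero, sub_self, zero_sub, neg_zero] at this
      simpa using this.mono_left nhdsWithin_le_nhds
    · have : Tendsto (fun h : ℝ => 3 * h ^ 2) (𝓝 0) (𝓝 (3 * 0 ^ 2)) :=
        (continuous_const.mul (continuous_pow 2)).tendsto 0
      norm_num at this
      exact this.mono_left nhdsWithin_le_nhds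
    · exact hdiv2
  apply HasDerivAt.lhopital_zero_nhdsGT (f' := fun h => g (x + h) - g x - h * deriv g x)
    (g' := fun h => 3 * h ^ 2)
  · filter_upwards with h; exact hN h
  · filter_upwards with h
    exact (hasDerivAt_pow 3 h).congr_deriv (by push_cast; ring)
  · filter_upwards [self_mem_nhdsWithin] with h (hh : h ∈ Ioi (0:ℝ))
    have : (0:ℝ) < h := hh
    positivity
  · have hc : Continuous fun h : ℝ =>
        (∫ y in x..x + h, g y) - h * g x - h ^ 2 / 2 * deriv g x := by
      apply Continuous.sub
      apply Continuous.sub hcont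
      · exact continuous_id.mul continuous_const
      · exact ((continuous_pow 2).div_const 2).mul continuous_const
    have := hc.tendsto 0
    simp only [add_zero, integral_same, zero_mul, sub_zero] at this
    norm_num at this
    exact this.mono_left nhdsWithin_le_nhds
  · have : Tendsto (fun h : ℝ => h ^ 3) (𝓝 0) (𝓝 ((0:ℝ) ^ 3)) := (continuous_pow 3).tendsto 0
    norm_num at this
    exact this.mono_left nhdsWithin_le_nhds
  · exact step2

lemma aux_quad_limit {f : ℝ → ℝ} (hf1 : Differentiable ℝ f) (p : ℝ)
    (hf2 : HasDerivAt (deriv f) (deriv (deriv f) p) p) :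
    Tendsto (fun t : ℝ => (f (p + t) - f p - deriv f p * t) / t ^ 2)
      (𝓝[≠] (0:ℝ)) (𝓝 (deriv (deriv f) p / 2)) := by
  apply HasDerivAt.lhopital_zero_nhdsNE (f' := fun t => deriv f (p + t) - deriv f p)
    (g' := fun t => 2 * t)
  · filter_upwards with t
    have h1 : HasDerivAt (fun t : ℝ => f (p + t)) (deriv f (p + t)) t := by
      have := ((hf1 (p + t)).hasDerivAt).comp t ((hasDerivAt_id t).const_add p)
      simpa [Function.comp_def] using this
    have h2 : HasDerivAt (fun t : ℝ => deriv f p * t) (deriv f p) t := by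
      simpa using (hasDerivAt_id t).const_mul (deriv f p)
    exact ((h1.sub (hasDerivAt_const t (f p))).sub h2).congr_deriv (by ring)
  · filter_upwards with t
    exact (hasDerivAt_pow 2 t).congr_deriv (by push_cast; ring)
  · filter_upwards [self_mem_nhdsWithin] with t ht
    have : t ≠ 0 := ht
    simpa using this
  · have hc : Continuous fun t : ℝ => f (p + t) - f p - deriv f p * t :=
      ((hf1.continuous.comp (continuous_const.add continuous_id)).sub continuous_const).sub
        (continuous_const.mul continuous_id)
    have := hc.tendsto 0
    norm_num at this
    exact this.mono_left nhdsWithin_le_nhds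
  · have : Tendsto (fun t : ℝ => t ^ 2) (𝓝 0) (𝓝 ((0:ℝ) ^ 2)) := (continuous_pow 2).tendsto 0
    norm_num at this
    exact this.mono_left nhdsWithin_le_nhds
  · have := (aux_slope_comp_limit hf2).div_const 2
    refine this.congr fun t => ?_
    rw [div_div, mul_comm]

lemma aux_swap_integral {F : ℝ → ℝ} (hFc : Continuous F) {A B : ℝ}
    (hF0 : ∀ x, x ∉ Ioo A B → F x = 0) {h : ℝ} (hh : 0 < h) :
    ∫ x : ℝ, (∫ y in x..x + h, F y) = h * ∫ x, F x := by
  set ν : Measure ℝ := volume.restrict (Ioc 0 h) with hν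
  haveI : IsFiniteMeasure ν := ⟨by
    rw [hν, Measure.restrict_apply_univ]
    exact measure_Ioc_lt_top⟩
  set φ : ℝ → ℝ := fun s => max 0 (min 1 (min (s + 1) (h + 1 - s))) with hφdef
  have hφc : Continuous φ :=
    continuous_const.max (continuous_const.min
      ((continuous_id.add continuous_const).min (continuous_const.sub continuous_id)))
  have hφ1 : ∀ s ∈ Ioc (0:ℝ) h, φ s = 1 := by
    intro s hs
    have h1 : (1:ℝ) ≤ s + 1 := by linarith [hs.1]
    have h2 : (1:ℝ) ≤ h + 1 - s := by linarith [hs.2]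
    simp only [hφdef]
    rw [min_eq_left (le_min h1 h2)]
    norm_num
  have hφsupp : ∀ s, φ s ≠ 0 → s ∈ Icc (-1 : ℝ) (h + 1) := by
    intro s hs
    have hpos : 0 < min 1 (min (s + 1) (h + 1 - s)) := by
      by_contra hle
      push_neg at hle
      exact hs (max_eq_left hle)
    have h1 := (lt_min_iff.mp hpos).2
    have h2 := lt_min_iff.mp h1
    exact ⟨by linarith [h2.1], by linarith [h2.2]⟩
  have hswap :
      ∫ x : ℝ, (∫ s, F (x + s) * φ s ∂ν) = ∫ s, (∫ x : ℝ, F (x + s) * φ s) ∂ν := by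
    apply integral_integral_swap_of_hasCompactSupport
    · exact (hFc.comp (continuous_fst.add continuous_snd)).mul (hφc.comp continuous_snd)
    · apply HasCompactSupport.intro
        (isCompact_Icc (a := ((A - (h+1), (-1:ℝ)) : ℝ × ℝ)) (b := (B + 1, h + 1)))
      rintro ⟨x, s⟩ hp
      simp only [Function.uncurry]
      by_contra hne
      rcases mul_ne_zero_iff.mp hne with ⟨hF, hφs⟩
      have hx : x + s ∈ Ioo A B := by
        by_contra hmem; exact hF (hF0 _ hmem)
      have hsmem := hφsupp s hφs
      apply hp
      simp only [Set.mem_Icc, Prod.le_def]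
      refine ⟨⟨?_, ?_⟩, ?_, ?_⟩
      · linarith [hx.1, hsmem.2]
      · linarith [hsmem.1]
      · linarith [hx.2, hsmem.1]
      · linarith [hsmem.2]
  have hleft : ∀ x : ℝ, (∫ s, F (x + s) * φ s ∂ν) = ∫ y in x..x + h, F y := by
    intro x
    rw [hν]
    have : ∀ s ∈ Ioc (0:ℝ) h, F (x + s) * φ s = F (x + s) := by
      intro s hs; rw [hφ1 s hs, mul_one]
    rw [setIntegral_congr_fun measurableSet_Ioc this]
    rw [← intervalIntegral.integral_of_le hh.le]
    rw [intervalIntegral.integral_comp_add_left (a := 0) (b := h) F x]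
    norm_num
  have hright : ∀ s : ℝ, (∫ x : ℝ, F (x + s) * φ s) = φ s * ∫ x, F x := by
    intro s
    rw [MeasureTheory.integral_mul_const]
    rw [integral_add_right_eq_self F s]
    ring
  calc ∫ x : ℝ, (∫ y in x..x + h, F y)
      = ∫ x : ℝ, (∫ s, F (x + s) * φ s ∂ν) :=
        MeasureTheory.integral_congr_ae (Eventually.of_forall fun x => (hleft x).symm)
    _ = ∫ s, (∫ x : ℝ, F (x + s) * φ s) ∂ν := hswap
    _ = ∫ s, (φ s * ∫ x, F x) ∂ν :=
        MeasureTheory.integral_congr_ae (Eventually.of_forall fun s => hright s)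
    _ = ∫ s in Ioc 0 h, (φ s * ∫ x, F x) := by rw [hν]
    _ = ∫ s in Ioc 0 h, ((1:ℝ) * ∫ x, F x) := by
        refine setIntegral_congr_fun measurableSet_Ioc fun s hs => ?_
        rw [hφ1 s hs]
    _ = h * ∫ x, F x := by
        rw [setIntegral_const]
        simp [Real.volume_Ioc, ENNReal.toReal_ofReal hh.le, hh.le]

lemma aux_c2_derivs {f : ℝ → ℝ} (hf : ContDiff ℝ 2 f) :
    Differentiable ℝ f ∧ Differentiable ℝ (deriv f) ∧ Continuous (deriv (deriv f)) := by
  rw [show (2 : WithTop ℕ∞) = 1 + 1 from by norm_num] at hf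
  obtain ⟨hd, -, h1⟩ := contDiff_succ_iff_deriv.mp hf
  obtain ⟨hd2, hc2⟩ := contDiff_one_iff_deriv.mp h1
  exact ⟨hd, hd2, hc2⟩

end Aux

/-- If `f` is `C²` with `f(0) = f'(0) = 0` and `u ∈ Y ∩ C²(ℝ)`, then
`lim_{h→0⁺} E_h(u) = (1/24) ∫_ℝ f''(u(x)) |u'(x)|² dx`. -/
theorem pointwise_limit_one_dim (a b : ℝ) (hab : a < b)
    (f : ℝ → ℝ) (hf : ContDiff ℝ 2 f) (hfpos : ∀ t, 0 ≤ f t)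
    (hf0 : f 0 = 0) (hf'0 : deriv f 0 = 0)
    (u : ℝ → ℝ) (hu2 : ContDiff ℝ 2 u)
    (huY : MemLp u 2 (volume : Measure ℝ)) (hu0 : ∀ x ∉ Ioo a b, u x = 0) :
    Tendsto
      (fun h : ℝ =>
        (1 / h ^ 2) * ∫ x, (f (u x) - f ((1 / h) * ∫ y in x..(x + h), u y)))
      (𝓝[>] 0)
      (𝓝 ((1 / 24) * ∫ x, deriv (deriv f) (u x) * (deriv u x) ^ 2)) := by
  obtain ⟨hfd, hQd, hQ2c⟩ := aux_c2_derivs hf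
  obtain ⟨hud, hu'd, hu2c⟩ := aux_c2_derivs hu2
  have huc : Continuous u := hu2.continuous
  have hu'c : Continuous (deriv u) := hu'd.continuous
  have hFc : Continuous (fun x => f (u x)) := hf.continuous.comp huc
  have hFd : Differentiable ℝ (fun x => f (u x)) := hfd.comp hud
  have hF0 : ∀ x, x ∉ Ioo a b → f (u x) = 0 := fun x hx => by rw [hu0 x hx, hf0]
  -- sup bound for u
  obtain ⟨M0, hM0⟩ := (isCompact_Icc (a := a) (b := b)).exists_bound_of_continuousOn
    huc.continuousOn
  set M : ℝ := max M0 0 with hMdef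
  have hM : ∀ x, |u x| ≤ M := by
    intro x
    by_cases hx : x ∈ Icc a b
    · exact le_trans (by simpa [Real.norm_eq_abs] using hM0 x hx) (le_max_left _ _)
    · rw [hu0 x (fun hmem => hx (Ioo_subset_Icc_self hmem)), abs_zero, hMdef]
      exact le_max_right M0 0
  -- deriv u vanishes outside [a,b]
  have hu'0 : ∀ x, x ∉ Icc a b → deriv u x = 0 := by
    intro x hx
    have hx' : x < a ∨ b < x := by
      by_contra hcon
      push_neg at hcon
      exact hx (mem_Icc.mpr ⟨hcon.1, hcon.2⟩)
    rcases hx' with hxa | hxb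
    · have hev : u =ᶠ[𝓝 x] fun _ => 0 := by
        filter_upwards [Iio_mem_nhds hxa] with y hy
        exact hu0 y (fun hmem => absurd hmem.1 (by simp at hy ⊢; linarith))
      rw [hev.deriv_eq, deriv_const]
    · have hev : u =ᶠ[𝓝 x] fun _ => 0 := by
        filter_upwards [Ioi_mem_nhds hxb] with y hy
        exact hu0 y (fun hmem => absurd hmem.2 (by simp at hy ⊢; linarith))
      rw [hev.deriv_eq, deriv_const]
  obtain ⟨L0, hL0⟩ := (isCompact_Icc (a := a) (b := b)).exists_bound_of_continuousOn
    hu'c.continuousOn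
  set L : ℝ := max L0 0 with hLdef
  have hL : ∀ x, |deriv u x| ≤ L := by
    intro x
    by_cases hx : x ∈ Icc a b
    · exact le_trans (by simpa [Real.norm_eq_abs] using hL0 x hx) (le_max_left _ _)
    · rw [hu'0 x hx, abs_zero, hLdef]; exact le_max_right L0 0
  have hLnn : 0 ≤ L := le_max_right L0 0
  have hulip : ∀ y z : ℝ, |u y - u z| ≤ L * |y - z| := by
    intro y z
    have := Convex.norm_image_sub_le_of_norm_deriv_le (f := u) (s := univ)
      (fun w _ => hud w) (fun w _ => by simpa [Real.norm_eq_abs] using hL w)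
      convex_univ (mem_univ z) (mem_univ y)
    simpa [Real.norm_eq_abs] using this
  obtain ⟨C0, hC0⟩ := (isCompact_Icc (a := -M) (b := M)).exists_bound_of_continuousOn
    hQ2c.continuousOn
  set C : ℝ := max C0 0 with hCdef
  have hC : ∀ r ∈ Icc (-M) M, |deriv (deriv f) r| ≤ C := fun r hr =>
    le_trans (by simpa [Real.norm_eq_abs] using hC0 r hr) (le_max_left _ _)
  have hCnn : 0 ≤ C := le_max_right C0 0
  have hMmem : ∀ t : ℝ, |t| ≤ M → t ∈ Icc (-M) M := by
    intro t ht
    have := abs_le.mp ht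
    exact ⟨this.1, this.2⟩
  -- average bound
  have hm_bound : ∀ h : ℝ, 0 < h → ∀ x : ℝ, |(1 / h) * ∫ y in x..x + h, u y| ≤ M := by
    intro h hh x
    have h1 : ‖∫ y in x..x + h, u y‖ ≤ M * |x + h - x| :=
      intervalIntegral.norm_integral_le_of_norm_le_const
        (fun y _ => by simpa [Real.norm_eq_abs] using hM y)
    rw [Real.norm_eq_abs] at h1
    have h2 : |x + h - x| = h := by rw [add_sub_cancel_left, abs_of_pos hh]
    rw [h2] at h1
    rw [abs_mul, abs_of_pos (by positivity : (0:ℝ) < 1 / h)]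
    calc (1 / h) * |∫ y in x..x + h, u y| ≤ (1 / h) * (M * h) := by
          apply mul_le_mul_of_nonneg_left h1 (by positivity)
      _ = M := by field_simp
  -- vanishing outside the strip
  have hzero_u : ∀ h : ℝ, 0 < h → ∀ x : ℝ, (x + h < a ∨ b < x) →
      (∫ y in x..x + h, u y) = 0 := by
    intro h hh x hcase
    rw [show (∫ y in x..x + h, u y) = ∫ y in x..x + h, (0:ℝ) from
      intervalIntegral.integral_congr ?_]
    · simp
    · intro y hy
      rw [uIcc_of_le (by linarith)] at hy
      apply hu0
      rcases hcase with hc | hc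
      · exact fun hmem => absurd hmem.1 (by push_neg; linarith [hy.2])
      · exact fun hmem => absurd hmem.2 (by push_neg; linarith [hy.1])
  have hzero_F : ∀ h : ℝ, 0 < h → ∀ x : ℝ, (x + h < a ∨ b < x) →
      (∫ y in x..x + h, f (u y)) = 0 := by
    intro h hh x hcase
    rw [show (∫ y in x..x + h, f (u y)) = ∫ y in x..x + h, (0:ℝ) from
      intervalIntegral.integral_congr ?_]
    · simp
    · intro y hy
      rw [uIcc_of_le (by linarith)] at hy
      apply hF0
      rcases hcase with hc | hc
      · exact fun hmem => absurd hmem.1 (by push_neg; linarith [hy.2])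
      · exact fun hmem => absurd hmem.2 (by push_neg; linarith [hy.1])
  -- continuity in x of the sliding integrals
  have hslide : ∀ (g : ℝ → ℝ), Continuous g → ∀ h : ℝ,
      Continuous fun x : ℝ => ∫ y in x..x + h, g y := by
    intro g hg h
    have hP : Continuous fun r : ℝ => ∫ y in (0:ℝ)..r, g y :=
      intervalIntegral.continuous_primitive (fun c d => hg.intervalIntegrable c d) 0
    have : (fun x : ℝ => ∫ y in x..x + h, g y)
        = fun x : ℝ => (∫ y in (0:ℝ)..x + h, g y) - ∫ y in (0:ℝ)..x, g y := by
      funext x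
      rw [intervalIntegral.integral_interval_sub_left (hg.intervalIntegrable 0 (x + h))
        (hg.intervalIntegrable 0 x)]
    rw [this]
    exact (hP.comp (continuous_id.add continuous_const)).sub hP
  -- integrability
  have hFint : Integrable (fun x => f (u x)) :=
    hFc.integrable_of_hasCompactSupport (HasCompactSupport.intro isCompact_Icc
      (fun x hx => hF0 x (fun hmem => hx (Ioo_subset_Icc_self hmem))))
  have houtside : ∀ h : ℝ, 0 < h → ∀ x : ℝ, x ∉ Icc (a - h) b → (x + h < a ∨ b < x) := by
    intro h hh x hx
    by_contra hcon
    push_neg at hcon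
    exact hx (mem_Icc.mpr ⟨by linarith [hcon.1], hcon.2⟩)
  have hfm_int : ∀ h : ℝ, 0 < h →
      Integrable (fun x => f ((1 / h) * ∫ y in x..x + h, u y)) := by
    intro h hh
    apply Continuous.integrable_of_hasCompactSupport
    · exact hf.continuous.comp (continuous_const.mul (hslide u huc h))
    · apply HasCompactSupport.intro (isCompact_Icc (a := a - h) (b := b))
      intro x hx
      rw [hzero_u h hh x (houtside h hh x hx)]
      simpa using hf0
  have hAF_int : ∀ h : ℝ, 0 < h →
      Integrable (fun x => (1 / h) * ∫ y in x..x + h, f (u y)) := by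
    intro h hh
    apply Continuous.integrable_of_hasCompactSupport
    · exact continuous_const.mul (hslide _ hFc h)
    · apply HasCompactSupport.intro (isCompact_Icc (a := a - h) (b := b))
      intro x hx
      rw [hzero_F h hh x (houtside h hh x hx)]
      simp
  -- quantitative bound
  have hGb : ∀ h : ℝ, 0 < h → ∀ x : ℝ,
      |(1 / h) * (∫ y in x..x + h, f (u y)) - f ((1 / h) * ∫ y in x..x + h, u y)|
        ≤ C * L ^ 2 * h ^ 2 := by
    intro h hh x
    set m : ℝ := (1 / h) * ∫ y in x..x + h, u y with hm
    have hmM : |m| ≤ M := hm_bound h hh x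
    have hIoc : Set.uIoc x (x + h) = Ioc x (x + h) := uIoc_of_le (by linarith)
    have hub : ∀ y ∈ Set.uIoc x (x + h), |u y - m| ≤ L * h := by
      intro y hy
      rw [hIoc, mem_Ioc] at hy
      have e1 : (∫ z in x..x + h, (u y - u z)) = h * u y - ∫ z in x..x + h, u z := by
        rw [intervalIntegral.integral_sub (intervalIntegrable_const)
          (huc.intervalIntegrable _ _), intervalIntegral.integral_const]
        simp [smul_eq_mul]
      have e2 : u y - m = (1 / h) * ∫ z in x..x + h, (u y - u z) := by
        rw [e1, hm]
        field_simp
      rw [e2, abs_mul, abs_of_pos (by positivity : (0:ℝ) < 1 / h)]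
      have hptb : ∀ z ∈ Set.uIoc x (x + h), ‖u y - u z‖ ≤ L * h := by
        intro z hz
        rw [hIoc, mem_Ioc] at hz
        rw [Real.norm_eq_abs]
        calc |u y - u z| ≤ L * |y - z| := hulip y z
          _ ≤ L * h := by
              apply mul_le_mul_of_nonneg_left _ hLnn
              rw [abs_le]
              constructor <;> linarith [hy.1, hy.2, hz.1, hz.2]
      have h3 : |∫ z in x..x + h, (u y - u z)| ≤ (L * h) * |x + h - x| := by
        have := intervalIntegral.norm_integral_le_of_norm_le_const hptb
        simpa [Real.norm_eq_abs] using this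
      have h4 : |x + h - x| = h := by rw [add_sub_cancel_left, abs_of_pos hh]
      rw [h4] at h3
      calc (1 / h) * |∫ z in x..x + h, (u y - u z)| ≤ (1 / h) * ((L * h) * h) :=
            mul_le_mul_of_nonneg_left h3 (by positivity)
        _ = L * h := by field_simp
    have hkey : (∫ y in x..x + h, (f (u y) - f m - deriv f m * (u y - m)))
        = (∫ y in x..x + h, f (u y)) - h * f m := by
      have i1 : IntervalIntegrable (fun y => f (u y)) volume x (x + h) :=
        hFc.intervalIntegrable _ _
      have i2 : IntervalIntegrable (fun _ : ℝ => f m) volume x (x + h) :=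
        intervalIntegrable_const
      have i3 : IntervalIntegrable (fun y => deriv f m * (u y - m)) volume x (x + h) :=
        (continuous_const.mul (huc.sub continuous_const)).intervalIntegrable _ _
      rw [intervalIntegral.integral_sub (i1.sub i2) i3,
        intervalIntegral.integral_sub i1 i2,
        intervalIntegral.integral_const_mul,
        intervalIntegral.integral_sub (huc.intervalIntegrable _ _) intervalIntegrable_const,
        intervalIntegral.integral_const, intervalIntegral.integral_const]
      have hΦu : (∫ y in x..x + h, u y) = h * m := by rw [hm]; field_simp
      rw [hΦu]
      simp [smul_eq_mul]
    have hptb2 : ∀ y ∈ Set.uIoc x (x + h),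
        ‖f (u y) - f m - deriv f m * (u y - m)‖ ≤ C * (L * h) ^ 2 := by
      intro y hy
      rw [Real.norm_eq_abs]
      calc |f (u y) - f m - deriv f m * (u y - m)| ≤ C * (u y - m) ^ 2 :=
            aux_taylor_bound hfd hQd hC (hMmem m hmM) (hMmem (u y) (hM y))
        _ ≤ C * (L * h) ^ 2 := by
            apply mul_le_mul_of_nonneg_left _ hCnn
            have := hub y hy
            calc (u y - m) ^ 2 = |u y - m| ^ 2 := (sq_abs _).symm
              _ ≤ (L * h) ^ 2 := pow_le_pow_left₀ (abs_nonneg _) this 2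
    have hb2 : |∫ y in x..x + h, (f (u y) - f m - deriv f m * (u y - m))|
        ≤ (C * (L * h) ^ 2) * h := by
      have := intervalIntegral.norm_integral_le_of_norm_le_const hptb2
      have h4 : |x + h - x| = h := by rw [add_sub_cancel_left, abs_of_pos hh]
      rw [Real.norm_eq_abs, h4] at this
      exact this
    have e3 : (1 / h) * (∫ y in x..x + h, f (u y)) - f m
        = (1 / h) * ∫ y in x..x + h, (f (u y) - f m - deriv f m * (u y - m)) := by
      rw [hkey]
      field_simp
    rw [e3, abs_mul, abs_of_pos (by positivity : (0:ℝ) < 1 / h)]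
    calc (1 / h) * |∫ y in x..x + h, (f (u y) - f m - deriv f m * (u y - m))|
        ≤ (1 / h) * ((C * (L * h) ^ 2) * h) :=
          mul_le_mul_of_nonneg_left hb2 (by positivity)
      _ = C * L ^ 2 * h ^ 2 := by field_simp
  -- pointwise limit
  have hptwise : ∀ x : ℝ, Tendsto (fun h : ℝ =>
      (1 / h ^ 2) * ((1 / h) * (∫ y in x..x + h, f (u y))
        - f ((1 / h) * ∫ y in x..x + h, u y)))
      (𝓝[>] (0:ℝ)) (𝓝 ((1 / 24) * (deriv (deriv f) (u x) * (deriv u x) ^ 2))) := by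
    intro x
    have hh0 : Tendsto (fun h : ℝ => h) (𝓝[>] (0:ℝ)) (𝓝 0) :=
      tendsto_id.mono_right nhdsWithin_le_nhds
    -- cube limit for u
    have cu := aux_cube_limit huc hud x (hu'd x).hasDerivAt
    -- chain rule for F := f ∘ u
    have hderivF : deriv (fun w => f (u w)) = fun w => deriv f (u w) * deriv u w :=
      funext fun w => (HasDerivAt.comp w (hfd (u w)).hasDerivAt (hud w).hasDerivAt).deriv
    have hF2at : HasDerivAt (deriv (fun w => f (u w)))
        (deriv (deriv f) (u x) * deriv u x * deriv u x + deriv f (u x) * deriv (deriv u) x)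
        x := by
      rw [hderivF]
      exact (HasDerivAt.comp x (hQd (u x)).hasDerivAt (hud x).hasDerivAt).mul
        (hu'd x).hasDerivAt
    have cF := aux_cube_limit hFc hFd x (hF2at.deriv ▸ hF2at)
    rw [hF2at.deriv] at cF
    -- limits for the sliding average of u
    have lim2 : Tendsto (fun h : ℝ => ((1 / h) * (∫ y in x..x + h, u y) - u x) / h)
        (𝓝[>] (0:ℝ)) (𝓝 (deriv u x / 2)) := by
      have base := (hh0.mul cu).add (tendsto_const_nhds (x := deriv u x / 2))
      rw [zero_mul, zero_add] at base
      refine Tendsto.congr' ?_ base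
      filter_upwards [self_mem_nhdsWithin] with h (hh : (0:ℝ) < h)
      have hne : h ≠ 0 := ne_of_gt hh
      field_simp
      ring
    have lim3 : Tendsto (fun h : ℝ =>
        (((1 / h) * (∫ y in x..x + h, u y) - u x) - h / 2 * deriv u x) / h ^ 2)
        (𝓝[>] (0:ℝ)) (𝓝 (deriv (deriv u) x / 6)) := by
      refine Tendsto.congr' ?_ cu
      filter_upwards [self_mem_nhdsWithin] with h (hh : (0:ℝ) < h)
      have hne : h ≠ 0 := ne_of_gt hh
      field_simp
    have lim0 : Tendsto (fun h : ℝ => (1 / h) * (∫ y in x..x + h, u y) - u x)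
        (𝓝[>] (0:ℝ)) (𝓝 0) := by
      have base := hh0.mul lim2
      rw [zero_mul] at base
      refine Tendsto.congr' ?_ base
      filter_upwards [self_mem_nhdsWithin] with h (hh : (0:ℝ) < h)
      have hne : h ≠ 0 := ne_of_gt hh
      field_simp
    -- expansion of the sliding average of F
    have limA : Tendsto (fun h : ℝ =>
        ((1 / h) * (∫ y in x..x + h, f (u y)) - f (u x)
          - h / 2 * (deriv f (u x) * deriv u x)) / h ^ 2)
        (𝓝[>] (0:ℝ))
        (𝓝 ((deriv (deriv f) (u x) * deriv u x * deriv u x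
          + deriv f (u x) * deriv (deriv u) x) / 6)) := by
      refine Tendsto.congr' ?_ cF
      filter_upwards [self_mem_nhdsWithin] with h (hh : (0:ℝ) < h)
      have hne : h ≠ 0 := ne_of_gt hh
      rw [hderivF]
      field_simp
    -- the quadratic remainder ratio
    have hq := aux_quad_limit hfd (u x) (hQd (u x)).hasDerivAt
    set rr : ℝ → ℝ := fun t => if t = 0 then deriv (deriv f) (u x) / 2
      else (f (u x + t) - f (u x) - deriv f (u x) * t) / t ^ 2 with hrr
    have hrrt : Tendsto rr (𝓝 (0:ℝ)) (𝓝 (deriv (deriv f) (u x) / 2)) := by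
      rw [← nhdsNE_sup_pure (0:ℝ), tendsto_sup]
      constructor
      · refine Tendsto.congr' ?_ hq
        filter_upwards [self_mem_nhdsWithin] with t ht
        have ht' : t ≠ 0 := ht
        rw [hrr]
        simp only [if_neg ht']
      · have : rr 0 = deriv (deriv f) (u x) / 2 := by rw [hrr]; simp
        rw [tendsto_pure_left]
        intro s hs
        rw [this]
        exact mem_of_mem_nhds hs
    have limR : Tendsto (fun h : ℝ =>
        (f (u x + ((1 / h) * (∫ y in x..x + h, u y) - u x)) - f (u x)
          - deriv f (u x) * ((1 / h) * (∫ y in x..x + h, u y) - u x)) / h ^ 2)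
        (𝓝[>] (0:ℝ))
        (𝓝 ((deriv (deriv f) (u x) / 2) * (deriv u x / 2) ^ 2)) := by
      have base := (hrrt.comp lim0).mul (lim2.pow 2)
      refine Tendsto.congr' ?_ base
      filter_upwards [self_mem_nhdsWithin] with h (hh : (0:ℝ) < h)
      have hne : h ≠ 0 := ne_of_gt hh
      simp only [Function.comp]
      generalize (1 / h) * (∫ y in x..x + h, u y) - u x = d
      by_cases hd0 : d = 0
      · simp [hd0, hrr]
      · simp only [hrr, if_neg hd0]
        field_simp
    -- assemble
    have final := (limA.sub (Tendsto.const_mul (deriv f (u x)) lim3)).sub limR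
    have hval : (deriv (deriv f) (u x) * deriv u x * deriv u x
          + deriv f (u x) * deriv (deriv u) x) / 6
        - deriv f (u x) * (deriv (deriv u) x / 6)
        - (deriv (deriv f) (u x) / 2) * (deriv u x / 2) ^ 2
        = (1 / 24) * (deriv (deriv f) (u x) * (deriv u x) ^ 2) := by ring
    rw [hval] at final
    refine Tendsto.congr' ?_ final
    filter_upwards [self_mem_nhdsWithin] with h (hh : (0:ℝ) < h)
    have hne : h ≠ 0 := ne_of_gt hh
    have hPδ : u x + ((1 / h) * (∫ y in x..x + h, u y) - u x)
        = (1 / h) * ∫ y in x..x + h, u y := by ring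
    rw [hPδ]
    generalize hA : f ((1 / h) * ∫ y in x..x + h, u y) = A
    generalize hB : (∫ y in x..x + h, f (u y)) = B
    generalize hD : (∫ y in x..x + h, u y) = D
    field_simp
    ring
  -- dominated convergence
  have hmain : Tendsto (fun h : ℝ => ∫ x, (1 / h ^ 2) *
      ((1 / h) * (∫ y in x..x + h, f (u y)) - f ((1 / h) * ∫ y in x..x + h, u y)))
      (𝓝[>] (0:ℝ))
      (𝓝 (∫ x, (1 / 24) * (deriv (deriv f) (u x) * (deriv u x) ^ 2))) := by
    apply MeasureTheory.tendsto_integral_filter_of_dominated_convergence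
      (bound := Set.indicator (Icc (a - 1) b) (fun _ => C * L ^ 2))
    · filter_upwards with h
      exact (continuous_const.mul ((continuous_const.mul (hslide _ hFc h)).sub
        (hf.continuous.comp (continuous_const.mul (hslide u huc h))))).aestronglyMeasurable
    · filter_upwards [Ioo_mem_nhdsGT_of_mem (by norm_num : (0:ℝ) ∈ Ico (0:ℝ) 1)] with h hh
      obtain ⟨hh0, hh1⟩ := hh
      refine Eventually.of_forall fun x => ?_
      by_cases hx : x ∈ Icc (a - 1) b
      · rw [indicator_of_mem hx]
        rw [Real.norm_eq_abs, abs_mul, abs_of_pos (show (0:ℝ) < 1 / h ^ 2 by positivity)]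
        calc (1 / h ^ 2) * |(1 / h) * (∫ y in x..x + h, f (u y))
              - f ((1 / h) * ∫ y in x..x + h, u y)|
            ≤ (1 / h ^ 2) * (C * L ^ 2 * h ^ 2) :=
              mul_le_mul_of_nonneg_left (hGb h hh0 x) (by positivity)
          _ = C * L ^ 2 := by field_simp
      · rw [indicator_of_notMem hx]
        have hcase : x + h < a ∨ b < x := by
          rcases not_and_or.mp (fun hmem => hx (mem_Icc.mpr hmem)) with h1 | h1
          · left; push_neg at h1; linarith
          · right; push_neg at h1; exact h1
        rw [hzero_F h hh0 x hcase, hzero_u h hh0 x hcase]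
        simp [hf0]
    · exact (integrable_indicator_iff measurableSet_Icc).mpr
        (integrableOn_const measure_Icc_lt_top.ne)
    · exact Eventually.of_forall hptwise
  have hfinal : (1 / 24 : ℝ) * ∫ x, deriv (deriv f) (u x) * (deriv u x) ^ 2
      = ∫ x, (1 / 24) * (deriv (deriv f) (u x) * (deriv u x) ^ 2) :=
    (MeasureTheory.integral_const_mul _ _).symm
  rw [hfinal]
  refine Tendsto.congr' ?_ hmain
  filter_upwards [self_mem_nhdsWithin] with h (hh : (0:ℝ) < h)
  have hne : h ≠ 0 := ne_of_gt hh
  have hAF : ∫ x, (1 / h) * ∫ y in x..x + h, f (u y) = ∫ x, f (u x) := by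
    rw [MeasureTheory.integral_const_mul, aux_swap_integral hFc hF0 hh]
    field_simp
  calc ∫ x, (1 / h ^ 2) *
        ((1 / h) * (∫ y in x..x + h, f (u y)) - f ((1 / h) * ∫ y in x..x + h, u y))
      = (1 / h ^ 2) * ∫ x, ((1 / h) * (∫ y in x..x + h, f (u y))
          - f ((1 / h) * ∫ y in x..x + h, u y)) := MeasureTheory.integral_const_mul _ _
    _ = (1 / h ^ 2) * ((∫ x, (1 / h) * ∫ y in x..x + h, f (u y))
          - ∫ x, f ((1 / h) * ∫ y in x..x + h, u y)) := by
        rw [MeasureTheory.integral_sub (hAF_int h hh) (hfm_int h hh)]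
    _ = (1 / h ^ 2) * ((∫ x, f (u x)) - ∫ x, f ((1 / h) * ∫ y in x..x + h, u y)) := by
        rw [hAF]
    _ = (1 / h ^ 2) * ∫ x, (f (u x) - f ((1 / h) * ∫ y in x..x + h, u y)) := by
        rw [MeasureTheory.integral_sub hFint (hfm_int h hh)]
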